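/- For z > 0, h > 0, the semiclassical phase-space integral satisfies (2πh)^{-3} ∫_{ℝ³×ℝ³} min(p² - z/|u| + 1, 0) du dp = -z³/(12h³). -/

import Mathlib

open MeasureTheory Real Set Metric Filter MeasureTheory.Measure

section helpers

local notation "E3" => EuclideanSpace ℝ (Fin 3)

private lemma Gamma_five_half' : Real.Gamma (5/2) = 3/4 * √π := by
  have h1 : Real.Gamma (3/2 + 1) = (3/2) * Real.Gamma (3/2) := Real.Gamma_add_one (by norm_num)
  have h2 : Real.Gamma (1/2 + 1) = (1/2) * Real.Gamma (1/2) := Real.Gamma_add_one (by norm_num)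
  have h3 : Real.Gamma (1/2) = √π := Real.Gamma_one_half_eq
  norm_num at h1 h2
  rw [show (5:ℝ)/2 = 3/2 + 1 by norm_num]
  norm_num
  rw [h1, h2, h3]; ring

private lemma vol_ball_E3' : (volume (Metric.ball (0:E3) 1)).toReal = 4 * π / 3 := by
  rw [EuclideanSpace.volume_ball]
  have hπ : (0:ℝ) < π := pi_pos
  have hs : √π ^ 3 = π * √π := by
    have : √π * √π = π := Real.mul_self_sqrt hπ.le
    nlinarith [Real.sqrt_nonneg π]
  simp only [Fintype.card_fin]
  rw [show ((3:ℕ):ℝ)/2 + 1 = 5/2 by norm_num, Gamma_five_half']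
  rw [ENNReal.ofReal_one, one_pow, one_mul, ENNReal.toReal_ofReal (by positivity)]
  rw [hs]
  have h0 : √π ≠ 0 := by positivity
  field_simp

private lemma radial_integral' (f : ℝ → ℝ) :
    ∫ x : E3, f ‖x‖ = (4 * π) * ∫ y in Ioi (0:ℝ), y ^ 2 * f y := by
  rw [MeasureTheory.integral_fun_norm_addHaar volume f]
  have hd : Module.finrank ℝ E3 = 3 := by simp [finrank_euclideanSpace]
  rw [hd, measureReal_def, vol_ball_E3']
  simp only [smul_eq_mul, nsmul_eq_mul, Nat.cast_ofNat]
  ring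

private lemma radial_integrable' (f : ℝ → ℝ) (hf : Measurable f)
    (h : IntegrableOn (fun y => y ^ 2 * f y) (Ioi (0:ℝ))) :
    Integrable (fun x : E3 => f ‖x‖) := by
  have hd : Module.finrank ℝ E3 = 3 := by simp [finrank_euclideanSpace]
  have hmeas : MeasurableSet ({0}ᶜ : Set E3) := (measurableSet_singleton 0).compl
  have h1 : Integrable (fun x : ({0}ᶜ : Set E3) => f ‖x.1‖) (volume.comap Subtype.val) →
      Integrable (fun x : E3 => f ‖x‖) volume := by
    intro hI
    have h1' := ((MeasurableEmbedding.subtype_coe hmeas).integrable_map_iff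
      (g := fun x : E3 => f ‖x‖)).mpr hI
    rwa [map_comap_subtype_coe hmeas, MeasureTheory.restrict_compl_singleton] at h1'
  apply h1
  have h2 := (volume : Measure E3).measurePreserving_homeomorphUnitSphereProd
  rw [show (fun x : ({0}ᶜ : Set E3) => f ‖x.1‖) =
      (f ∘ Subtype.val ∘ Prod.snd) ∘ (homeomorphUnitSphereProd E3) from by funext x; simp]
  rw [h2.integrable_comp_emb (Homeomorph.measurableEmbedding _)]
  rw [hd]
  have hmf : Measurable (f ∘ Subtype.val ∘ Prod.snd :
      sphere (0:E3) 1 × Ioi (0:ℝ) → ℝ) :=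
    (hf.comp measurable_subtype_coe).comp measurable_snd
  rw [integrable_prod_iff' hmf.aestronglyMeasurable]
  have h5 : IntegrableOn (fun y : ℝ => ‖f y‖ * (ENNReal.ofReal (y ^ 2)).toReal) (Ioi (0:ℝ)) := by
    refine IntegrableOn.congr_fun h.norm (fun y hy => ?_) measurableSet_Ioi
    rw [ENNReal.toReal_ofReal (by positivity), norm_mul, norm_pow, norm_of_nonneg hy.out.le]
    ring
  have h6 : Integrable (fun y : (Ioi (0:ℝ)) => ‖f y.1‖ * (ENNReal.ofReal (y.1 ^ 2)).toReal)
      (Measure.comap Subtype.val volume) := by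
    have := ((MeasurableEmbedding.subtype_coe measurableSet_Ioi).integrable_map_iff
      (g := fun y : ℝ => ‖f y‖ * (ENNReal.ofReal (y ^ 2)).toReal)).mp
      (by rw [map_comap_subtype_coe measurableSet_Ioi]; exact h5)
    exact this
  constructor
  · exact Filter.Eventually.of_forall fun y => by
      simpa only [Function.comp_apply] using integrable_const (f y.1)
  · simp only [Function.comp_apply, integral_const, smul_eq_mul]
    apply Integrable.const_mul
    rw [Measure.volumeIoiPow,
      integrable_withDensity_iff (by fun_prop)
        (Filter.Eventually.of_forall fun x => ENNReal.ofReal_lt_top)]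
    exact h6

variable {z m : ℝ}

private lemma eqOn_inner₁ (hm : 0 < m) :
    EqOn (fun y : ℝ => m * y ^ 2 - z * y) (fun y => y ^ 2 * min (m - z / y) 0)
      (Ioc 0 (z / m)) := by
  intro y hy
  have hy0 : 0 < y := hy.1
  have h1 : m ≤ z / y := by
    rw [le_div_iff₀ hy0]
    calc m * y ≤ m * (z / m) := by nlinarith [hy.2]
    _ = z := by field_simp
  simp only [min_eq_left (sub_nonpos.mpr h1)]
  field_simp

private lemma eqOn_inner₂ (hz : 0 < z) (hm : 0 < m) :
    EqOn (fun y : ℝ => y ^ 2 * min (m - z / y) 0) (fun _ => (0:ℝ)) (Ioi (z / m)) := by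
  intro y hy
  have hR : 0 < z / m := div_pos hz hm
  have hy0 : 0 < y := hR.trans hy
  have h1 : z / y < m := by
    rw [div_lt_iff₀ hy0]
    calc z = m * (z / m) := by field_simp
    _ < m * y := by nlinarith [hy.out]
  simp only [min_eq_right (sub_nonneg.mpr h1.le)]
  ring

private lemma inner_integrableOn₀ (hz : 0 < z) (hm : 0 < m) :
    IntegrableOn (fun y : ℝ => y ^ 2 * min (m - z / y) 0) (Ioi (0:ℝ)) := by
  have hR : 0 < z / m := div_pos hz hm
  rw [← Ioc_union_Ioi_eq_Ioi hR.le, integrableOn_union]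
  constructor
  · refine IntegrableOn.congr_fun ?_ (eqOn_inner₁ hm) measurableSet_Ioc
    exact (Continuous.integrableOn_Ioc (by continuity))
  · exact (integrableOn_zero).congr_fun (fun y hy => (eqOn_inner₂ hz hm hy).symm)
      measurableSet_Ioi

private lemma inner_integral₀ (hz : 0 < z) (hm : 0 < m) :
    ∫ y in Ioi (0:ℝ), y ^ 2 * min (m - z / y) 0 = -(z ^ 3 / (6 * m ^ 2)) := by
  have hR : 0 < z / m := div_pos hz hm
  rw [← Ioc_union_Ioi_eq_Ioi hR.le,
    setIntegral_union (Ioc_disjoint_Ioi le_rfl) measurableSet_Ioi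
      ((inner_integrableOn₀ hz hm).mono_set
        (by rw [← Ioc_union_Ioi_eq_Ioi hR.le]; exact subset_union_left))
      ((inner_integrableOn₀ hz hm).mono_set
        (by rw [← Ioc_union_Ioi_eq_Ioi hR.le]; exact subset_union_right))]
  rw [setIntegral_congr_fun measurableSet_Ioc (eqOn_inner₁ hm).symm,
    setIntegral_congr_fun measurableSet_Ioi (eqOn_inner₂ hz hm), integral_zero, add_zero]
  rw [← intervalIntegral.integral_of_le hR.le]
  have : ∫ y in (0:ℝ)..(z/m), (m * y ^ 2 - z * y) = m * (z/m)^3/3 - z * (z/m)^2/2 := by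
    open intervalIntegral in
    rw [integral_sub ((intervalIntegrable_pow 2).const_mul m)
      (intervalIntegrable_id.const_mul z),
      intervalIntegral.integral_const_mul, intervalIntegral.integral_const_mul, integral_pow, integral_id]
    norm_num
    ring
  rw [this]
  field_simp
  ring

private lemma outer_hasDeriv₀ (y : ℝ) :
    HasDerivAt (fun x : ℝ => (arctan x - x / (x ^ 2 + 1)) / 2)
      (y ^ 2 * ((y ^ 2 + 1) ^ 2)⁻¹) y := by
  have h1 : HasDerivAt Real.arctan (1 / (1 + y ^ 2)) y := Real.hasDerivAt_arctan y
  have hne : y ^ 2 + 1 ≠ 0 := by positivity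
  have h2 : HasDerivAt (fun x : ℝ => x / (x ^ 2 + 1))
      ((1 * (y ^ 2 + 1) - y * ((2:ℕ) * y ^ (2 - 1))) / (y ^ 2 + 1) ^ 2) y :=
    (hasDerivAt_id y).div (((hasDerivAt_pow 2 y).add_const 1)) hne
  have h3 := (h1.sub h2).div_const 2
  refine h3.congr_deriv ?_
  have hne' : (1 : ℝ) + y ^ 2 ≠ 0 := by positivity
  field_simp
  ring

private lemma outer_tendsto₀ :
    Tendsto (fun x : ℝ => (arctan x - x / (x ^ 2 + 1)) / 2) atTop (nhds (π / 4)) := by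
  have h1 : Tendsto Real.arctan atTop (nhds (π / 2)) :=
    Real.tendsto_arctan_atTop.mono_right nhdsWithin_le_nhds
  have h2 : Tendsto (fun x : ℝ => x / (x ^ 2 + 1)) atTop (nhds 0) := by
    have ha : Tendsto (fun x : ℝ => x⁻¹) atTop (nhds 0) := tendsto_inv_atTop_zero
    have hb : Tendsto (fun x : ℝ => (1 + (x ^ 2)⁻¹)⁻¹) atTop (nhds 1) := by
      have : Tendsto (fun x : ℝ => (x ^ 2)⁻¹) atTop (nhds 0) :=
        tendsto_inv_atTop_zero.comp (tendsto_pow_atTop two_ne_zero)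
      have := (tendsto_const_nhds (x := (1:ℝ)) (f := atTop)).add this
      norm_num at this
      simpa using this.inv₀ (by norm_num)
    have hc := ha.mul hb
    rw [zero_mul] at hc
    refine hc.congr' ?_
    filter_upwards [eventually_gt_atTop (0:ℝ)] with x hx
    have hx2 : x ^ 2 ≠ 0 := by positivity
    field_simp
  have h3 := (h1.sub h2).div_const 2
  rw [sub_zero] at h3
  convert h3 using 2
  ring

private lemma outer_integrableOn₀ :
    IntegrableOn (fun y : ℝ => y ^ 2 * ((y ^ 2 + 1) ^ 2)⁻¹) (Ioi (0:ℝ)) :=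
  integrableOn_Ioi_deriv_of_nonneg' (fun x _ => outer_hasDeriv₀ x)
    (fun x _ => by positivity) outer_tendsto₀

private lemma outer_integral₀ :
    ∫ y in Ioi (0:ℝ), y ^ 2 * ((y ^ 2 + 1) ^ 2)⁻¹ = π / 4 := by
  have h := integral_Ioi_of_hasDerivAt_of_nonneg
    ((outer_hasDeriv₀ 0).continuousAt.continuousWithinAt)
    (fun x _ => outer_hasDeriv₀ x) (fun x _ => by positivity) outer_tendsto₀
  simpa using h

end helpers

/-- Semiclassical phase-space integral for the Coulomb potential:
`(2πh)⁻³ ∫∫ (p² - z/|u| + 1)_- du dp = -z³/(12h³)`. -/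
theorem coulomb_phase_space_integral (z h : ℝ) (hz : 0 < z) (hh : 0 < h) :
    (2 * Real.pi * h) ^ (-(3 : ℝ)) *
      (∫ up : EuclideanSpace ℝ (Fin 3) × EuclideanSpace ℝ (Fin 3),
        min (‖up.2‖ ^ 2 - z / ‖up.1‖ + 1) 0)
      = -z ^ 3 / (12 * h ^ 3) := by
  let E3 := EuclideanSpace ℝ (Fin 3)
  show (2 * Real.pi * h) ^ (-(3 : ℝ)) *
      (∫ up : EuclideanSpace ℝ (Fin 3) × EuclideanSpace ℝ (Fin 3),
        min (‖up.2‖ ^ 2 - z / ‖up.1‖ + 1) 0)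
      = -z ^ 3 / (12 * h ^ 3)
  -- the integrand as a function of (u, p)
  set f : E3 × E3 → ℝ := fun up => min ((‖up.2‖ ^ 2 + 1) - z / ‖up.1‖) 0 with hf_def
  have hstep0 : (∫ up : E3 × E3, min (‖up.2‖ ^ 2 - z / ‖up.1‖ + 1) 0) = ∫ up : E3 × E3, f up := by
    congr 1; funext up; rw [hf_def]; ring_nf
  have hmf : Measurable f := by
    apply Measurable.min _ measurable_const
    exact (((measurable_norm.comp measurable_snd).pow_const 2).add_const 1).sub
      (measurable_const.div (measurable_norm.comp measurable_fst))
  -- inner 1D data for fixed p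
  have hm : ∀ p : E3, (0:ℝ) < ‖p‖ ^ 2 + 1 := fun p => by positivity
  have hF_meas : ∀ p : E3, Measurable (fun y : ℝ => min ((‖p‖ ^ 2 + 1) - z / y) 0) :=
    fun p => (measurable_const.sub (measurable_const.div measurable_id)).min measurable_const
  -- inner integrability over u, for each p
  have hInt_inner : ∀ p : E3, Integrable (fun u : E3 => f (u, p)) := by
    intro p
    exact radial_integrable' (fun y => min ((‖p‖ ^ 2 + 1) - z / y) 0) (hF_meas p)
      (inner_integrableOn₀ hz (hm p))
  -- value of the inner integral
  have hVal_inner : ∀ p : E3,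
      (∫ u : E3, f (u, p)) = -(2 * π / 3) * (z ^ 3 * ((‖p‖ ^ 2 + 1) ^ 2)⁻¹) := by
    intro p
    have := radial_integral' (fun y => min ((‖p‖ ^ 2 + 1) - z / y) 0)
    rw [show (fun u : E3 => f (u, p)) =
      (fun u : E3 => (fun y => min ((‖p‖ ^ 2 + 1) - z / y) 0) ‖u‖) from rfl]
    rw [this, inner_integral₀ hz (hm p)]
    have : (‖p‖ ^ 2 + 1) ^ 2 ≠ 0 := by positivity
    field_simp
    ring
  -- value of the inner integral of the norm
  have hVal_norm : ∀ p : E3,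
      (∫ u : E3, ‖f (u, p)‖) = (2 * π / 3) * (z ^ 3 * ((‖p‖ ^ 2 + 1) ^ 2)⁻¹) := by
    intro p
    have h1 : (∫ u : E3, ‖f (u, p)‖) = ∫ u : E3, -f (u, p) := by
      congr 1; funext u
      rw [Real.norm_eq_abs, abs_of_nonpos (min_le_right _ _)]
    rw [h1, integral_neg, hVal_inner p]
    ring
  -- integrability of the outer function
  have hbase : Integrable (fun p : E3 => ((‖p‖ ^ 2 + 1) ^ 2)⁻¹) := by
    have hfin : ((Module.finrank ℝ E3 : ℝ)) < 4 := by
      have h3 : Module.finrank ℝ E3 = 3 := finrank_euclideanSpace_fin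
      rw [h3]; norm_num
    have h4 := integrable_rpow_neg_one_add_norm_sq (E := E3) (μ := volume) hfin
    have heq : (fun x : E3 => ((1:ℝ) + ‖x‖ ^ 2) ^ ((-4:ℝ)/2)) =
        (fun x : E3 => ((‖x‖ ^ 2 + 1) ^ 2)⁻¹) := by
      funext x
      rw [show ((-4:ℝ)/2) = -(2:ℝ) by norm_num, Real.rpow_neg (by positivity),
        show ((2:ℝ) = ((2:ℕ):ℝ)) by norm_num, Real.rpow_natCast, add_comm]
    rw [← heq]
    exact h4
  -- integrability on the product space
  have hProdInt : Integrable f (volume.prod volume) := by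
    rw [integrable_prod_iff' hmf.aestronglyMeasurable]
    constructor
    · exact Filter.Eventually.of_forall hInt_inner
    · refine ((hbase.const_mul ((2 * π / 3) * z ^ 3)).congr ?_)
      refine Filter.Eventually.of_forall fun p => ?_
      show (2 * π / 3) * z ^ 3 * ((‖p‖ ^ 2 + 1) ^ 2)⁻¹ = ∫ u : E3, ‖f (u, p)‖
      rw [hVal_norm p]
      ring
  -- Fubini
  rw [hstep0, MeasureTheory.Measure.volume_eq_prod, integral_prod_symm f hProdInt]
  have hOuter : (∫ p : E3, ∫ u : E3, f (u, p)) = -(2 * π ^ 3 / 3) * z ^ 3 := by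
    have h1 : (∫ p : E3, ∫ u : E3, f (u, p)) =
        ∫ p : E3, (-(2 * π / 3) * z ^ 3) * ((‖p‖ ^ 2 + 1) ^ 2)⁻¹ := by
      congr 1; funext p; rw [hVal_inner p]; ring
    rw [h1, integral_const_mul]
    have h2 : (∫ p : E3, ((‖p‖ ^ 2 + 1) ^ 2)⁻¹) = (4 * π) * (π / 4) := by
      have := radial_integral' (fun y => ((y ^ 2 + 1) ^ 2)⁻¹)
      rw [show (fun p : E3 => ((‖p‖ ^ 2 + 1) ^ 2)⁻¹) =
        (fun p : E3 => (fun y => ((y ^ 2 + 1) ^ 2)⁻¹) ‖p‖) from rfl]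
      rw [this, outer_integral₀]
    rw [h2]
    ring
  rw [hOuter]
  have hpos : (0:ℝ) < 2 * π * h := by positivity
  rw [Real.rpow_neg hpos.le, show ((3:ℝ) = ((3:ℕ):ℝ)) by norm_num, Real.rpow_natCast]
  have hπ : π ≠ 0 := Real.pi_ne_zero
  field_simp
  ring
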